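/- arXiv:2409.07285 — 7 statements merged into one kernel-verified Lean document; each statement's English description precedes it below -/
import Mathlib

section
/- Let Γ be a set of temporal valued relations on ℚ. If the constant-zero operation does not improve Γ (equivalently, there exist R ∈ Γ of arity k and t ∈ ℚ^k with R(t) < R(0,…,0)), then the crisp binary relation ≠ belongs to ⟨Γ⟩ or the crisp binary relation < belongs to ⟨Γ⟩. If moreover every relation in Γ is Sym(ℚ)-invariant, then the crisp relation ≠ belongs to ⟨Γ⟩. -/
open Classical

/-- A valued relation of arity `k` on `ℚ`. -/
abbrev VRel (k : ℕ) : Type := (Fin k → ℚ) → WithTop ℚ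

/-- The crisp valued relation associated to a set of tuples: `0` on the set, `∞` off it. -/
noncomputable def crisp {k : ℕ} (S : Set (Fin k → ℚ)) : VRel k :=
  fun t => if t ∈ S then 0 else ⊤

/-- A unary operation improves a valued relation. -/
def Improves1 (f : ℚ → ℚ) {k : ℕ} (R : VRel k) : Prop :=
  ∀ t : Fin k → ℚ, R (fun i => f (t i)) ≤ R t

/-- A binary operation improves a valued relation: `2·R(g(s,t)) ≤ R(s) + R(t)`. -/
def Improves2 (g : ℚ → ℚ → ℚ) {k : ℕ} (R : VRel k) : Prop :=
  ∀ s t : Fin k → ℚ, 2 • R (fun i => g (s i) (t i)) ≤ R s + R t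

/-- A valued relation is temporal if it is invariant under all order-preserving
bijections of `ℚ`. -/
def Temporal {k : ℕ} (R : VRel k) : Prop :=
  ∀ α : ℚ → ℚ, Function.Bijective α → StrictMono α →
    ∀ t : Fin k → ℚ, R (fun i => α (t i)) = R t

/-- A valued relation is `Sym(ℚ)`-invariant if it is invariant under all bijections of `ℚ`. -/
def SymInvariant {k : ℕ} (R : VRel k) : Prop :=
  ∀ α : ℚ → ℚ, Function.Bijective α →
    ∀ t : Fin k → ℚ, R (fun i => α (t i)) = R t

/-- The valued relational clone generated by a set `Γ` of valued relations on `ℚ`: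
the smallest set of valued relations containing `Γ`, crisp equality and the crisp empty
unary relation, closed under sums of atomic expressions, projection (infimum over extra
coordinates), shifting, nonnegative scaling, `Feas` and `Opt`. -/
inductive Clone (Γ : Set ((k : ℕ) × VRel k)) : {k : ℕ} → VRel k → Prop where
  | base {k : ℕ} {R : VRel k} : Sigma.mk k R ∈ Γ → Clone Γ R
  | eqRel : Clone Γ (crisp {t : Fin 2 → ℚ | t 0 = t 1})
  | emptyRel : Clone Γ (crisp (∅ : Set (Fin 1 → ℚ)))
  | sum {m n : ℕ} {k : Fin m → ℕ} {R : ∀ i : Fin m, VRel (k i)}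
      (σ : ∀ i : Fin m, Fin (k i) → Fin n) :
      (∀ i : Fin m, Clone Γ (R i)) →
      Clone Γ (fun x : Fin n → ℚ => ∑ i : Fin m, R i (fun j => x (σ i j)))
  | proj {k n : ℕ} {R : VRel (k + n)} {R' : VRel k} :
      Clone Γ R →
      (∀ s : Fin k → ℚ,
        IsGLB {v : WithTop ℚ | ∃ t : Fin n → ℚ, v = R (Fin.append s t)} (R' s)) →
      Clone Γ R'
  | shift {k : ℕ} {R : VRel k} (c : ℚ) :
      Clone Γ R → Clone Γ (fun t => R t + (c : WithTop ℚ))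
  | scale {k : ℕ} {R : VRel k} (q : ℚ) (hq : 0 ≤ q) :
      Clone Γ R → Clone Γ (fun t => (q : WithTop ℚ) * R t)
  | feas {k : ℕ} {R : VRel k} :
      Clone Γ R → Clone Γ (fun t => if R t ≠ ⊤ then 0 else ⊤)
  | opt {k : ℕ} {R : VRel k} :
      Clone Γ R → Clone Γ (fun t => if R t ≠ ⊤ ∧ ∀ s, R t ≤ R s then 0 else ⊤)

/-- The crisp binary order relation `<` on `ℚ`. -/
def LtS : Set (Fin 2 → ℚ) := {t | t 0 < t 1}

/-- The crisp binary disequality relation on `ℚ`. -/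
def NeS : Set (Fin 2 → ℚ) := {t | t 0 ≠ t 1}

def BetwS : Set (Fin 3 → ℚ) :=
  {t | (t 0 < t 1 ∧ t 1 < t 2) ∨ (t 2 < t 1 ∧ t 1 < t 0)}

def CycS : Set (Fin 3 → ℚ) :=
  {t | (t 0 < t 1 ∧ t 1 < t 2) ∨ (t 1 < t 2 ∧ t 2 < t 0) ∨ (t 2 < t 0 ∧ t 0 < t 1)}

/-- `c` lies strictly between `a` and `b`. -/
def StrictBetween (a b c : ℚ) : Prop := (a < c ∧ c < b) ∨ (b < c ∧ c < a)

def SepS : Set (Fin 4 → ℚ) :=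
  {t | Function.Injective t ∧
    Xor' (StrictBetween (t 0) (t 1) (t 2)) (StrictBetween (t 0) (t 1) (t 3))}

def T3S : Set (Fin 3 → ℚ) :=
  {t | (t 0 = t 1 ∧ t 1 < t 2) ∨ (t 0 = t 2 ∧ t 2 < t 1)}

def NegT3S : Set (Fin 3 → ℚ) := {t | (fun i => -(t i)) ∈ T3S}

def DisS : Set (Fin 3 → ℚ) :=
  {t | (t 0 = t 1 ∧ t 1 ≠ t 2) ∨ (t 0 ≠ t 1 ∧ t 1 = t 2)}

/-- The binary valued relation `R_{α,β,γ}` on `ℚ`. -/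
noncomputable def Rabc (a b c : WithTop ℚ) : VRel 2 :=
  fun t => if t 0 = t 1 then a else if t 0 < t 1 then b else c

/-- A lex-operation on `ℚ`. -/
def IsLex (l : ℚ → ℚ → ℚ) : Prop :=
  ∀ x x' y y' : ℚ, l x y < l x' y' ↔ (x < x' ∨ (x = x' ∧ y < y'))

/-- The dual of a binary operation on `ℚ`. -/
def dualOp (g : ℚ → ℚ → ℚ) : ℚ → ℚ → ℚ := fun x y => -g (-x) (-y)

/-- Operations of `mx` type. -/
def IsMx (g : ℚ → ℚ → ℚ) : Prop :=
  ∃ ene eeq : ℚ → ℚ, StrictMono ene ∧ StrictMono eeq ∧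
    (∀ x ε : ℚ, 0 < ε → ene x < eeq x ∧ eeq x < ene (x + ε)) ∧
    ∀ x y : ℚ, g x y = if x = y then eeq x else ene (min x y)

/-- Operations of `mi` type. -/
def IsMi (g : ℚ → ℚ → ℚ) : Prop :=
  ∃ elt eeq egt : ℚ → ℚ, StrictMono elt ∧ StrictMono eeq ∧ StrictMono egt ∧
    (∀ x ε : ℚ, 0 < ε → eeq x < egt x ∧ egt x < elt x ∧ elt x < eeq (x + ε)) ∧
    ∀ x y : ℚ, g x y = if x < y then elt x else if x = y then eeq x else egt y

/-- Operations of `lele` type. -/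
def IsLele (g : ℚ → ℚ → ℚ) : Prop :=
  ∃ eneg epos : ℚ → ℚ, StrictMono eneg ∧ StrictMono epos ∧
    (∀ x, eneg x < 0) ∧ (∀ x, 0 < epos x) ∧
    ∃ l, IsLex l ∧
      ∀ x y : ℚ, g x y = if x ≤ 0 then l (eneg x) (eneg y) else l (epos y) (epos x)

/-- A binary operation preserves a crisp relation (given as a set of tuples). -/
def Pres2 (g : ℚ → ℚ → ℚ) {k : ℕ} (S : Set (Fin k → ℚ)) : Prop :=
  ∀ s t : Fin k → ℚ, s ∈ S → t ∈ S → (fun i => g (s i) (t i)) ∈ S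

/-- The feasibility relation of a valued relation. -/
def FeasSet {k : ℕ} (R : VRel k) : Set (Fin k → ℚ) := {t | R t ≠ ⊤}

/-- The set of minimal-value feasible tuples of a valued relation. -/
def OptSet {k : ℕ} (R : VRel k) : Set (Fin k → ℚ) := {t | R t ≠ ⊤ ∧ ∀ s, R t ≤ R s}

/-- `g` preserves every relation of the crisp structure `Γ̂`, consisting of `Feas(R)`
for `R ∈ Γ` and `Opt(R_σ)` for all minors `R_σ` of relations `R ∈ Γ`. -/
def PresHat (g : ℚ → ℚ → ℚ) (Γ : Set ((k : ℕ) × VRel k)) : Prop :=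
  ∀ p ∈ Γ, Pres2 g (FeasSet p.2) ∧
    ∀ (n : ℕ) (σ : Fin p.1 → Fin n),
      Pres2 g (OptSet (fun x : Fin n → ℚ => p.2 (fun j => x (σ j))))

/-- `g` is min, max, of mx/mi/lele type, or the dual of an mx/mi/lele type operation. -/
def GoodOp (g : ℚ → ℚ → ℚ) : Prop :=
  g = (fun x y => min x y) ∨ g = (fun x y => max x y) ∨ IsMx g ∨ IsMi g ∨ IsLele g ∨
    ∃ h, (IsMx h ∨ IsMi h ∨ IsLele h) ∧ g = dualOp h

/-- `g` is the constant-zero binary operation, min, max, or of mx/mi/lele type. -/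
def BaseOp (g : ℚ → ℚ → ℚ) : Prop :=
  g = (fun _ _ => (0 : ℚ)) ∨ g = (fun x y => min x y) ∨ g = (fun x y => max x y) ∨
    IsMx g ∨ IsMi g ∨ IsLele g

/-!
Pick `R ∈ Γ` and `t₁` with `R t₁ < R (0, …, 0)`. Being temporal, `R` attains its minimum, and no
optimal tuple is constant. Among the optimal tuples take one with the fewest distinct entries and
identify coordinates carrying equal entries: every optimal tuple of the resulting minor `R'` is
injective, while the increasing enumeration of the entries is optimal. Projecting `Opt(R')` onto
two coordinates gives a crisp binary relation of `⟨Γ⟩` inside `≠` that contains an increasing pair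
and is invariant under every automorphism of `R`; it is therefore `<` or `≠`, and it is `≠` when
`R` is invariant under all bijections.
-/

section OrderIsoExtension

variable {K : Type*} [Field K] [LinearOrder K] [IsStrictOrderedRing K]

/-- The witness stretches the part above `p` linearly. -/
theorem exists_orderIso_fix_le_apply_eq {p c d : K} (hc : p < c) (hd : p < d) :
    ∃ β : K ≃o K, (∀ x ≤ p, β x = x) ∧ β c = d := by
  set r := (d - p) / (c - p)
  have hr : 0 < r := div_pos (sub_pos.2 hd) (sub_pos.2 hc)
  set f : K → K := fun x => if x ≤ p then x else p + r * (x - p)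
  have hf_above : ∀ {x}, p < x → f x = p + r * (x - p) := fun h => if_neg h.not_ge
  have hmono : StrictMono f := by
    intro x y hxy
    by_cases hy : y ≤ p
    · simpa [f, hy, hxy.le.trans hy] using hxy
    rw [not_le] at hy
    rw [hf_above hy]
    by_cases hx : x ≤ p
    · simp only [f, hx, if_true]; nlinarith
    · rw [hf_above (not_le.1 hx)]; nlinarith
  have hsurj : Function.Surjective f := by
    intro y
    by_cases hy : y ≤ p
    · exact ⟨y, if_pos hy⟩
    · refine ⟨p + (y - p) / r, ?_⟩
      rw [not_le] at hy
      rw [hf_above (lt_add_of_pos_right p (div_pos (sub_pos.2 hy) hr))]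
      field_simp
      ring
  refine ⟨StrictMono.orderIsoOfSurjective f hmono hsurj, fun x hx => if_pos hx, ?_⟩
  change f c = d
  rw [hf_above hc, div_mul_cancel₀ _ (sub_pos.2 hc).ne', add_sub_cancel]

theorem exists_le_lt_of_forall_lt {S : Finset K} {c : K} (h : ∀ x ∈ S, x < c) :
    ∃ p < c, ∀ x ∈ S, x ≤ p := by
  rcases S.eq_empty_or_nonempty with rfl | hS
  · exact ⟨c - 1, sub_one_lt c, by simp⟩
  · exact ⟨S.max' hS, h _ (S.max'_mem hS), fun x hx => S.le_max' x hx⟩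

theorem exists_orderIso_apply_eq_of_lt_iff {ι : Type*} [Fintype ι] {s t : ι → K}
    (h : ∀ i j, s i < s j ↔ t i < t j) : ∃ α : K ≃o K, ∀ i, α (s i) = t i := by
  have heq : ∀ i j, s i = s j → t i = t j := fun i j hij =>
    le_antisymm (not_lt.1 fun hlt => ((h j i).2 hlt).ne' hij)
      (not_lt.1 fun hlt => ((h i j).2 hlt).ne hij)
  suffices ∀ I : Finset ι, ∃ α : K ≃o K, ∀ i ∈ I, α (s i) = t i by
    simpa using this Finset.univ
  intro I
  induction I using Finset.induction_on_max_value s with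
  | empty => exact ⟨OrderIso.refl K, by simp⟩
  | insert i I _ hmax ih =>
    obtain ⟨α, hα⟩ := ih
    by_cases hrep : ∃ j ∈ I, s j = s i
    · obtain ⟨j, hj, hji⟩ := hrep
      refine ⟨α, (Finset.forall_mem_insert _ _ _).2 ⟨?_, hα⟩⟩
      rw [← hji, hα j hj, heq j i hji]
    push Not at hrep
    have hlt : ∀ j ∈ I, s j < s i := fun j hj => (hmax j hj).lt_of_ne (hrep j hj)
    obtain ⟨p, hp, hpI⟩ := exists_le_lt_of_forall_lt (S := I.image t) (c := min (α (s i)) (t i))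
      (by
        simp only [Finset.mem_image, forall_exists_index, and_imp, forall_apply_eq_imp_iff₂,
          lt_min_iff]
        exact fun j hj => ⟨hα j hj ▸ α.strictMono (hlt j hj), (h j i).1 (hlt j hj)⟩)
    obtain ⟨β, hβp, hβ⟩ := exists_orderIso_fix_le_apply_eq (lt_min_iff.1 hp).1 (lt_min_iff.1 hp).2
    refine ⟨α.trans β, (Finset.forall_mem_insert _ _ _).2 ⟨hβ, fun j hj => ?_⟩⟩
    simp only [OrderIso.trans_apply, hα j hj]
    exact hβp _ (hpI _ (Finset.mem_image_of_mem t hj))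

end OrderIsoExtension

namespace Temporal

variable {k : ℕ} {R : VRel k}

theorem apply_eq_of_lt_iff (hR : Temporal R) {s t : Fin k → ℚ}
    (h : ∀ i j, s i < s j ↔ t i < t j) : R s = R t := by
  obtain ⟨α, hα⟩ := exists_orderIso_apply_eq_of_lt_iff h
  rw [← hR α α.bijective α.strictMono s]
  exact congrArg R (funext hα)

/-- Replacing each entry by the number of entries strictly below it preserves the order type,
so a temporal relation takes no values besides those it takes on `{0, …, k}`-valued tuples. -/
theorem exists_forall_le (hR : Temporal R) : ∃ t₀ : Fin k → ℚ, ∀ s, R t₀ ≤ R s := by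
  obtain ⟨g₀, hg₀⟩ := Finite.exists_min fun g : Fin k → Fin (k + 1) => R fun i => (g i : ℚ)
  refine ⟨fun i => (g₀ i : ℚ), fun s => ?_⟩
  let below (x : ℚ) : Finset (Fin k) := Finset.univ.filter fun j => s j < x
  have hbelow_lt : ∀ {x y}, x ∈ Set.range s → x < y → (below x).card < (below y).card := by
    rintro _ y ⟨j, rfl⟩ hxy
    refine Finset.card_lt_card ((Finset.ssubset_iff_of_subset fun l hl => ?_).2 ⟨j, ?_⟩)
    · simp only [below, Finset.mem_filter] at hl ⊢
      exact ⟨hl.1, hl.2.trans hxy⟩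
    · simpa [below] using hxy
  have hbelow_le : ∀ {x y}, x ≤ y → (below x).card ≤ (below y).card := fun hxy =>
    Finset.card_le_card fun l hl => by
      simp only [below, Finset.mem_filter] at hl ⊢
      exact ⟨hl.1, hl.2.trans_le hxy⟩
  let rank (i : Fin k) : Fin (k + 1) :=
    ⟨(below (s i)).card, Nat.lt_succ_of_le ((Finset.card_filter_le _ _).trans (by simp))⟩
  have hrank : ∀ i j, s i < s j ↔ ((rank i : ℕ) : ℚ) < (rank j : ℕ) := fun i j => by
    rw [Nat.cast_lt]
    exact ⟨fun h => hbelow_lt ⟨i, rfl⟩ h, fun h => not_le.1 fun h' => h.not_ge (hbelow_le h')⟩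
  rw [hR.apply_eq_of_lt_iff hrank]
  exact hg₀ rank

end Temporal

theorem crisp_nonneg {k : ℕ} (S : Set (Fin k → ℚ)) (t : Fin k → ℚ) : 0 ≤ crisp S t := by
  unfold crisp
  split_ifs <;> simp

namespace Clone

variable {Γ : Set ((k : ℕ) × VRel k)}

theorem minor {k n : ℕ} {R : VRel k} (σ : Fin k → Fin n) (h : Clone Γ R) :
    Clone Γ fun x : Fin n → ℚ => R fun j => x (σ j) := by
  simpa using Clone.sum (m := 1) (k := fun _ => k) (R := fun _ => R) (fun _ => σ) fun _ => h

theorem crisp_optSet {k : ℕ} {R : VRel k} (h : Clone Γ R) : Clone Γ (crisp (OptSet R)) := by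
  convert h.opt using 2 with t
  exact if_congr Iff.rfl rfl rfl

theorem crisp_exists_append {k n : ℕ} {S : Set (Fin (k + n) → ℚ)} (h : Clone Γ (crisp S)) :
    Clone Γ (crisp {s | ∃ u, Fin.append s u ∈ S}) := by
  refine h.proj fun s => IsLeast.isGLB ?_
  by_cases hs : ∃ u, Fin.append s u ∈ S
  · obtain ⟨u, hu⟩ := hs
    refine ⟨⟨u, ?_⟩, ?_⟩
    · rw [crisp, if_pos ⟨u, hu⟩, crisp, if_pos hu]
    · rintro _ ⟨v, rfl⟩
      rw [crisp, if_pos ⟨u, hu⟩]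
      exact crisp_nonneg _ _
  · push Not at hs
    have htop : ∀ u, crisp S (Fin.append s u) = ⊤ := fun u => if_neg (hs u)
    refine ⟨⟨0, by rw [htop, crisp, if_neg (by simpa using hs)]⟩, ?_⟩
    rintro _ ⟨v, rfl⟩
    rw [htop]
    exact le_top

end Clone

theorem mem_optSet_comp {k : ℕ} {R : VRel k} {α : ℚ → ℚ}
    (hα : ∀ x, R (fun i => α (x i)) = R x) {t : Fin k → ℚ} (ht : t ∈ OptSet R) :
    (fun i => α (t i)) ∈ OptSet R :=
  ⟨by rw [hα]; exact ht.1, fun s => by rw [hα]; exact ht.2 s⟩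

/-- Take an optimal tuple with the fewest distinct entries and identify the coordinates carrying
equal entries. -/
theorem exists_minor_optSet_injective {k : ℕ} {R : VRel k} (hne : (OptSet R).Nonempty)
    (hnc : ∀ t ∈ OptSet R, ∃ i j, t i ≠ t j) :
    ∃ (n : ℕ) (σ : Fin k → Fin (2 + n)) (a : Fin (2 + n) → ℚ), StrictMono a ∧
      a ∈ OptSet (fun x => R fun j => x (σ j)) ∧
      ∀ u ∈ OptSet (fun x => R fun j => x (σ j)), Function.Injective u := by
  let numValues (t : Fin k → ℚ) : ℕ := (Finset.univ.image t).card
  let t₀ := Function.argminOn numValues (OptSet R) hne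
  have ht₀ : t₀ ∈ OptSet R := Function.argminOn_mem _ _ hne
  have hmem : ∀ i, t₀ i ∈ Finset.univ.image t₀ := fun i => Finset.mem_image_of_mem _ (by simp)
  obtain ⟨i₀, j₀, hij⟩ := hnc t₀ ht₀
  obtain ⟨n, hn⟩ := Nat.exists_eq_add_of_le
    (Finset.one_lt_card.2 ⟨_, hmem i₀, _, hmem j₀, hij⟩ : 2 ≤ numValues t₀)
  let e := (Finset.univ.image t₀).orderIsoOfFin hn
  let σ (i : Fin k) : Fin (2 + n) := e.symm ⟨t₀ i, hmem i⟩
  let a (r : Fin (2 + n)) : ℚ := e r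
  have hat : (fun j => a (σ j)) = t₀ := funext fun j => by simp [a, σ]
  have ha : a ∈ OptSet (fun x => R fun j => x (σ j)) :=
    ⟨by simpa only [hat] using ht₀.1, fun u => by simpa only [hat] using ht₀.2 _⟩
  refine ⟨n, σ, a, fun r r' h => e.strictMono h, ha, fun u hu => ?_⟩
  have huσ : (fun j => u (σ j)) ∈ OptSet R :=
    ⟨hu.1, fun s => (hu.2 a).trans (by simpa only [hat] using ht₀.2 s)⟩
  have hcard : (Finset.univ.image u).card = (Finset.univ : Finset (Fin (2 + n))).card := by
    refine le_antisymm Finset.card_image_le ?_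
    calc (Finset.univ : Finset (Fin (2 + n))).card = numValues t₀ :=
        (Finset.card_fin _).trans hn.symm
      _ ≤ numValues fun j => u (σ j) := Function.argminOn_le _ _ huσ
      _ ≤ (Finset.univ.image u).card := Finset.card_le_card <|
        Finset.image_subset_iff.2 fun j _ => Finset.mem_image_of_mem u (Finset.mem_univ _)
  rw [← Set.injOn_univ, ← Finset.coe_univ]
  exact Finset.card_image_iff.1 hcard

/-- The binary relation is the projection onto the first two coordinates of the optimal tuples
of the minor from `exists_minor_optSet_injective`. -/
theorem exists_crisp_mem_clone_of_lt_const {Γ : Set ((k : ℕ) × VRel k)} {k : ℕ} {R : VRel k}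
    (hΓ : Clone Γ R) (hR : Temporal R) {t₁ : Fin k → ℚ} (h : R t₁ < R fun _ => 0) :
    ∃ B : Set (Fin 2 → ℚ), Clone Γ (crisp B) ∧ B ⊆ NeS ∧ (∃ w ∈ B, w 0 < w 1) ∧
      ∀ α : ℚ → ℚ, (∀ x, R (fun i => α (x i)) = R x) → ∀ s ∈ B, (fun i => α (s i)) ∈ B := by
  obtain ⟨t₀, ht₀⟩ := hR.exists_forall_le
  have hnc : ∀ t ∈ OptSet R, ∃ i j, t i ≠ t j := by
    intro t ht
    by_contra! hconst
    have : R t = R fun _ => 0 := hR.apply_eq_of_lt_iff fun i j => by simp [hconst i j]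
    exact (ht.2 t₁).not_gt (this ▸ h)
  obtain ⟨n, σ, a, ha, haopt, hinj⟩ :=
    exists_minor_optSet_injective ⟨t₀, (ht₀ t₁).trans_lt (h.trans_le le_top) |>.ne, ht₀⟩ hnc
  refine ⟨{s | ∃ u, Fin.append s u ∈ OptSet fun x => R fun j => x (σ j)},
    ((hΓ.minor σ).crisp_optSet).crisp_exists_append, ?_, ?_, ?_⟩
  · rintro s ⟨u, hu⟩ h01
    have := hinj _ hu (by simpa [Fin.append_left] using h01 :
      Fin.append s u (Fin.castAdd n 0) = Fin.append s u (Fin.castAdd n 1))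
    simp [Fin.ext_iff] at this
  · refine ⟨fun i => a (Fin.castAdd n i), ⟨fun j => a (Fin.natAdd 2 j), ?_⟩,
      ha (by simp [Fin.lt_def])⟩
    rwa [Fin.append_castAdd_natAdd]
  · rintro α hα s ⟨u, hu⟩
    refine ⟨fun j => α (u j), ?_⟩
    have happend : Fin.append (fun i => α (s i)) (fun j => α (u j)) =
        fun i => α (Fin.append s u i) := by
      ext i
      refine Fin.addCases (fun j => ?_) (fun j => ?_) i <;> simp
    rw [happend]
    exact mem_optSet_comp (R := fun x => R fun j => x (σ j)) (fun x => hα _) hu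

theorem forall_lt_iff_of_fin_two {α : Type*} [Preorder α] {w s : Fin 2 → α}
    (h01 : w 0 < w 1 ↔ s 0 < s 1) (h10 : w 1 < w 0 ↔ s 1 < s 0) : ∀ i j, w i < w j ↔ s i < s j := by
  intro i j
  fin_cases i <;> fin_cases j <;> simp [h01, h10]

theorem eq_ltS_or_eq_neS {B : Set (Fin 2 → ℚ)} (hB : B ⊆ NeS) (hlt : ∃ w ∈ B, w 0 < w 1)
    (hinv : ∀ α : ℚ ≃o ℚ, ∀ s ∈ B, (fun i => α (s i)) ∈ B) : B = LtS ∨ B = NeS := by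
  have hmem : ∀ w ∈ B, ∀ s : Fin 2 → ℚ, (∀ i j, w i < w j ↔ s i < s j) → s ∈ B := by
    intro w hw s hws
    obtain ⟨α, hα⟩ := exists_orderIso_apply_eq_of_lt_iff hws
    simpa [hα] using hinv α w hw
  obtain ⟨w, hw, hw01⟩ := hlt
  have hlt_mem : ∀ s : Fin 2 → ℚ, s 0 < s 1 → s ∈ B := fun s hs =>
    hmem w hw s
      (forall_lt_iff_of_fin_two (iff_of_true hw01 hs) (iff_of_false hw01.not_gt hs.not_gt))
  by_cases hgt : ∃ w' ∈ B, w' 1 < w' 0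
  · obtain ⟨w', hw', hw'10⟩ := hgt
    refine Or.inr (Set.Subset.antisymm hB fun s (hs : s 0 ≠ s 1) => ?_)
    rcases hs.lt_or_gt with hs | hs
    · exact hlt_mem s hs
    · exact hmem w' hw' s
        (forall_lt_iff_of_fin_two (iff_of_false hw'10.not_gt hs.not_gt) (iff_of_true hw'10 hs))
  · push Not at hgt
    refine Or.inl (Set.Subset.antisymm (fun s hs => ?_) hlt_mem)
    exact (hgt s hs).lt_of_ne (hB hs)

theorem eq_neS {B : Set (Fin 2 → ℚ)} (hB : B ⊆ NeS) (hne : B.Nonempty)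
    (hinv : ∀ α : Equiv.Perm ℚ, ∀ s ∈ B, (fun i => α (s i)) ∈ B) : B = NeS := by
  have hinj : ∀ s ∈ NeS, Function.Injective s := fun s (hs : s 0 ≠ s 1) i j hij => by
    fin_cases i <;> fin_cases j <;> simp_all [eq_comm]
  obtain ⟨w, hw⟩ := hne
  refine Set.Subset.antisymm hB fun s hs => ?_
  obtain ⟨α, hα⟩ := Equiv.Perm.exists_extending_pair w s (hinj w (hB hw)) (hinj s hs)
  simpa [hα] using hinv α w hw

/-- If the constant-zero operation does not improve a set `Γ` of temporal valued
relations, then `⟨Γ⟩` contains crisp `≠` or crisp `<`; if moreover all relations of `Γ`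
are `Sym(ℚ)`-invariant, then `⟨Γ⟩` contains crisp `≠`. -/
theorem stmt2 (Γ : Set ((k : ℕ) × VRel k)) (hT : ∀ p ∈ Γ, Temporal p.2)
    (hc : ¬ ∀ p ∈ Γ, Improves1 (fun _ => 0) p.2) :
    (Clone Γ (crisp NeS) ∨ Clone Γ (crisp LtS)) ∧
      ((∀ p ∈ Γ, SymInvariant p.2) → Clone Γ (crisp NeS)) := by
  simp only [Improves1, not_forall, not_le] at hc
  obtain ⟨⟨k, R⟩, hp, t₁, ht₁⟩ := hc
  obtain ⟨B, hB, hBne, hBlt, hBinv⟩ :=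
    exists_crisp_mem_clone_of_lt_const (Clone.base hp) (hT _ hp) ht₁
  refine ⟨?_, fun hS => ?_⟩
  · rcases eq_ltS_or_eq_neS hBne hBlt
      (fun α => hBinv α (hT _ hp α α.bijective α.strictMono)) with rfl | rfl
    · exact Or.inr hB
    · exact Or.inl hB
  · rwa [← eq_neS hBne (hBlt.imp fun _ => And.left) fun α => hBinv α (hS _ hp α α.bijective)]
end

section
/- Let R be a Sym(ℚ)-invariant valued relation of arity k on ℚ, and suppose that some injective binary operation g : ℚ² → ℚ improves R. Then for every injective tuple s ∈ ℚ^k (pairwise distinct entries) with R(s) < ∞ and every t ∈ ℚ^k, one has R(s) ≤ R(t). -/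
open Classical

lemma extend_bij {k : ℕ} (u s : Fin k → ℚ) (hu : Function.Injective u)
    (hs : Function.Injective s) :
    ∃ α : ℚ → ℚ, Function.Bijective α ∧ ∀ i, α (u i) = s i := by
  classical
  have hSc : (Set.range u)ᶜ.Infinite := by
    have : (Set.range u).Finite := Set.finite_range u
    simpa using Set.Finite.infinite_compl this
  have hTc : (Set.range s)ᶜ.Infinite := by
    have : (Set.range s).Finite := Set.finite_range s
    simpa using Set.Finite.infinite_compl this
  have hScd : Nonempty (Denumerable ↥(Set.range u)ᶜ) := by
    rw [nonempty_denumerable_iff]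
    exact ⟨Set.Countable.to_subtype (Set.to_countable _), hSc.to_subtype⟩
  have hTcd : Nonempty (Denumerable ↥(Set.range s)ᶜ) := by
    rw [nonempty_denumerable_iff]
    exact ⟨Set.Countable.to_subtype (Set.to_countable _), hTc.to_subtype⟩
  obtain ⟨d1⟩ := hScd
  obtain ⟨d2⟩ := hTcd
  let eC : ↥(Set.range u)ᶜ ≃ ↥(Set.range s)ᶜ :=
    (@Denumerable.eqv _ d1).trans (@Denumerable.eqv _ d2).symm
  let eST : ↥(Set.range u) ≃ ↥(Set.range s) :=
    (Equiv.ofInjective u hu).symm.trans (Equiv.ofInjective s hs)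
  let α : ℚ ≃ ℚ :=
    (Equiv.Set.sumCompl (Set.range u)).symm.trans
      ((Equiv.sumCongr eST eC).trans (Equiv.Set.sumCompl (Set.range s)))
  refine ⟨α, α.bijective, fun i => ?_⟩
  have h1 : (Equiv.Set.sumCompl (Set.range u)).symm (u i) =
      Sum.inl ⟨u i, Set.mem_range_self i⟩ :=
    Equiv.Set.sumCompl_symm_apply_of_mem _
  show α (u i) = s i
  simp only [α, Equiv.trans_apply, h1, Equiv.sumCongr_apply, Sum.map_inl,
    Equiv.Set.sumCompl_apply_inl]
  have key : eST ⟨u i, Set.mem_range_self i⟩ = ⟨s i, Set.mem_range_self i⟩ := by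
    simp only [eST, Equiv.trans_apply]
    have h2 : (Equiv.ofInjective u hu).symm ⟨u i, Set.mem_range_self i⟩ = i := by
      apply (Equiv.ofInjective u hu).injective
      simp
    rw [h2]
    rfl
  rw [key]

/-- If a `Sym(ℚ)`-invariant valued relation `R` is improved by an injective binary
operation, then the value of `R` at any feasible injective tuple is a global minimum. -/
theorem stmt3 {k : ℕ} (R : VRel k) (hsym : SymInvariant R)
    (g : ℚ → ℚ → ℚ) (hg : Function.Injective fun p : ℚ × ℚ => g p.1 p.2)
    (himp : Improves2 g R) :
    ∀ s : Fin k → ℚ, Function.Injective s → R s ≠ ⊤ → ∀ t : Fin k → ℚ, R s ≤ R t := by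
  intro s hs hsne t
  set u : Fin k → ℚ := fun i => g (s i) (t i) with hu_def
  have hu : Function.Injective u := by
    intro i j hij
    have h := hg (a₁ := (s i, t i)) (a₂ := (s j, t j)) hij
    exact hs (congrArg Prod.fst h)
  obtain ⟨α, hαb, hα⟩ := extend_bij u s hu hs
  have hRu : R u = R s := by
    have h := hsym α hαb u
    rw [show (fun i => α (u i)) = s from funext hα] at h
    exact h.symm
  have h2 := himp s t
  rw [← hu_def, hRu, two_nsmul] at h2
  exact (WithTop.add_le_add_iff_left hsne).mp h2
end

section
/- Let Γ be a set of temporal valued relations on ℚ and let α ∈ ℚ with α > 1/3. If the valued relation R_{α,0,1} belongs to ⟨Γ⟩, then the crisp relation Cyc belongs to ⟨Γ⟩. -/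
open Classical

/-!
The relation `R(x,y) + R(y,z) + R(z,x)` with `R = R_{α,0,1}` costs `1` on `Cyc`, where one of
the three pairs descends and the other two ascend. Every other triple costs more: an
anticyclic triple costs `2`, one with exactly two equal entries costs `α + 1`, and a constant
one `3α`; the last is where `α > 1/3` enters. Hence `Cyc = Opt(R(x,y) + R(y,z) + R(z,x))`.
-/

noncomputable def cycSum (R : VRel 2) : VRel 3 :=
  fun x => R ![x 0, x 1] + R ![x 1, x 2] + R ![x 2, x 0]

namespace Clone

variable {Γ : Set ((k : ℕ) × VRel k)}

theorem cycSum_mem {R : VRel 2} (h : Clone Γ R) : Clone Γ (cycSum R) := by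
  have hsum := Clone.sum (R := fun _ : Fin 3 => R)
    (![![0, 1], ![1, 2], ![2, 0]] : Fin 3 → Fin 2 → Fin 3) fun _ => h
  convert hsum using 2 with x
  simp only [cycSum, Fin.sum_univ_three]
  congr 2 <;> congr 1 <;> ext j <;> fin_cases j <;> rfl

end Clone

theorem optSet_coe_eq {k : ℕ} (f : (Fin k → ℚ) → ℚ) (S : Set (Fin k → ℚ)) (m : ℚ)
    (hle : ∀ t, m ≤ f t) (hS : ∀ t, f t = m ↔ t ∈ S) (hne : S.Nonempty) :
    OptSet (fun t => (f t : WithTop ℚ)) = S := by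
  obtain ⟨t₀, ht₀⟩ := hne
  ext t
  simp only [OptSet, Set.mem_ofPred_eq, ne_eq, WithTop.coe_ne_top, not_false_eq_true,
    WithTop.coe_le_coe, true_and]
  refine ⟨fun ht => (hS t).1 (le_antisymm ?_ (hle t)), fun ht s => ?_⟩
  · exact (ht t₀).trans ((hS t₀).2 ht₀).le
  · exact ((hS t).2 ht).le.trans (hle s)

noncomputable def r01Cost (α x y : ℚ) : ℚ := if x = y then α else if x < y then 0 else 1

noncomputable def cycCost (α : ℚ) (t : Fin 3 → ℚ) : ℚ :=
  r01Cost α (t 0) (t 1) + r01Cost α (t 1) (t 2) + r01Cost α (t 2) (t 0)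

theorem Rabc_eq_coe_r01Cost (α : ℚ) (t : Fin 2 → ℚ) :
    Rabc (α : WithTop ℚ) 0 1 t = (r01Cost α (t 0) (t 1) : WithTop ℚ) := by
  unfold Rabc r01Cost
  split_ifs <;> simp

theorem cycSum_Rabc (α : ℚ) :
    cycSum (Rabc (α : WithTop ℚ) 0 1) = fun t => (cycCost α t : WithTop ℚ) := by
  funext t
  simp only [cycSum, cycCost, Rabc_eq_coe_r01Cost, Matrix.cons_val_zero,
    Matrix.cons_val_one, WithTop.coe_add]

theorem one_le_cycCost {α : ℚ} (hα : 1 / 3 < α) (t : Fin 3 → ℚ) : 1 ≤ cycCost α t := by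
  unfold cycCost r01Cost
  split_ifs <;> linarith

theorem cycCost_eq_one_iff {α : ℚ} (hα : 1 / 3 < α) (t : Fin 3 → ℚ) :
    cycCost α t = 1 ↔ t ∈ CycS := by
  simp only [CycS, Set.mem_ofPred_eq, cycCost, r01Cost]
  constructor
  · intro h
    by_contra! hnot
    obtain ⟨h₁, h₂, h₃⟩ := hnot
    split_ifs at h <;> first
      | linarith
      | linarith [h₁ (by linarith)]
      | linarith [h₂ (by linarith)]
      | linarith [h₃ (by linarith)]
  · rintro (⟨h₁, h₂⟩ | ⟨h₁, h₂⟩ | ⟨h₁, h₂⟩) <;> split_ifs <;> linarith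

theorem cycS_nonempty : CycS.Nonempty :=
  ⟨![0, 1, 2], Or.inl ⟨by simp, by simp⟩⟩

theorem stmt6_general (Γ : Set ((k : ℕ) × VRel k))
    (α : ℚ) (hα : 1 / 3 < α) (h : Clone Γ (Rabc (α : WithTop ℚ) 0 1)) :
    Clone Γ (crisp CycS) := by
  have hopt := h.cycSum_mem.crisp_optSet
  rwa [cycSum_Rabc, optSet_coe_eq _ CycS 1 (one_le_cycCost hα) (cycCost_eq_one_iff hα)
    cycS_nonempty] at hopt

/-- If `⟨Γ⟩` contains `R_{α,0,1}` with `α > 1/3`, for `Γ` a set of temporal valued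
relations, then `⟨Γ⟩` contains the crisp relation `Cyc`. -/
theorem stmt6 (Γ : Set ((k : ℕ) × VRel k)) (hT : ∀ p ∈ Γ, Temporal p.2)
    (α : ℚ) (hα : 1 / 3 < α) (h : Clone Γ (Rabc (α : WithTop ℚ) 0 1)) :
    Clone Γ (crisp CycS) :=
  stmt6_general Γ α hα h
end

section
/- Let Γ be a set of temporal valued relations on ℚ such that the crisp relation < belongs to ⟨Γ⟩. Let α, β, γ ∈ ℚ ∪ {∞} be such that either α < min(β,γ) < ∞, or β ≠ γ and both β and γ are finite. If R_{α,β,γ} belongs to ⟨Γ⟩, then the crisp relation Cyc belongs to ⟨Γ⟩. -/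
open Classical

/-! Let `m = min(α, β, γ)`; after swapping the arguments of `R_{α,β,γ}` we may assume `m < β < ∞`.
Projecting `z` out of `R_{α,β,γ}(y, z) + (x < z)` gives the binary relation costing `m` on `x < y`
and `β` on `x ≥ y`. Summed over the three edges of a triangle `x₀x₁x₂`, it costs `2m + β` exactly
when the triangle is cyclically ordered (two ascents out of three) and more otherwise, so `Opt`
of that sum is `Cyc`. -/

namespace Clone

variable {Γ : Set ((k : ℕ) × VRel k)}

theorem comp {k n : ℕ} {R : VRel k} (hR : Clone Γ R) (σ : Fin k → Fin n) :
    Clone Γ (fun x : Fin n → ℚ => R (fun j => x (σ j))) := by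
  simpa using Clone.sum (m := 1) (k := fun _ => k) (R := fun _ => R) (fun _ => σ) (fun _ => hR)

theorem add {n : ℕ} {R S : VRel n} (hR : Clone Γ R) (hS : Clone Γ S) :
    Clone Γ (fun x => R x + S x) := by
  have h := Clone.sum (m := 2) (k := fun _ => n) (R := ![R, S]) (fun _ => id) (by
    intro i; fin_cases i
    exacts [hR, hS])
  simpa [Fin.sum_univ_two] using h

theorem crisp_of_argmin {k : ℕ} {R : VRel k} (hR : Clone Γ R) {S : Set (Fin k → ℚ)} {v : ℚ}
    (hS : S.Nonempty) (hv : ∀ t ∈ S, R t = v) (hlt : ∀ t ∉ S, (v : WithTop ℚ) < R t) :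
    Clone Γ (crisp S) := by
  have hmin : ∀ s, (v : WithTop ℚ) ≤ R s := fun s => by
    by_cases hs : s ∈ S
    exacts [(hv s hs).ge, (hlt s hs).le]
  convert Clone.opt hR using 2 with t
  by_cases ht : t ∈ S
  · simp [crisp, ht, hv t ht, hmin]
  · obtain ⟨s, hs⟩ := hS
    have hts : ¬ R t ≤ R s := by rw [hv s hs]; exact (hlt t ht).not_ge
    simp only [crisp, ht, if_false]
    rw [if_neg (fun h => hts (h.2 s))]

end Clone

theorem Rabc_comp_swap (a b c : WithTop ℚ) :
    (fun x : Fin 2 → ℚ => Rabc a b c (fun j => x (![1, 0] j))) = Rabc a c b := by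
  funext x
  simp only [Rabc, Matrix.cons_val_zero, Matrix.cons_val_one]
  rcases lt_trichotomy (x 0) (x 1) with h | h | h
  · simp [h, h.ne, h.ne', h.not_gt]
  · simp [h]
  · simp [h, h.ne, h.ne', h.not_gt]

noncomputable def ltWeight (m b : ℚ) : VRel 2 :=
  fun t => ((if t 0 < t 1 then m else b : ℚ) : WithTop ℚ)

theorem ltWeight_isLeast {a c : WithTop ℚ} {m b : ℚ} (hm : min a (min (b : WithTop ℚ) c) = m)
    (x y : ℚ) :
    IsLeast {v | ∃ z : ℚ, v = Rabc a b c ![y, z] + crisp LtS ![x, z]} (ltWeight m b ![x, y]) := by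
  have hRabc : ∀ z, Rabc a b c ![y, z] = if y = z then a else if y < z then b else c := by
    simp [Rabc]
  have hLtS : ∀ z, crisp LtS ![x, z] = if x < z then 0 else ⊤ := by simp [crisp, LtS]
  have hW : ltWeight m b ![x, y] = if x < y then (m : WithTop ℚ) else b := by
    by_cases h : x < y <;> simp [ltWeight, h]
  simp only [hW, hRabc, hLtS]
  constructor
  · by_cases hxy : x < y
    · rw [if_pos hxy, ← hm]
      rcases min_choice a (min b c) with h | h <;> rw [h]
      · exact ⟨y, by simp [hxy]⟩
      rcases min_choice (b : WithTop ℚ) c with h' | h' <;> rw [h']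
      · exact ⟨y + 1, by simp [show x < y + 1 by linarith]⟩
      · have h₁ : (x + y) / 2 < y := by linarith
        have h₂ : x < (x + y) / 2 := by linarith
        exact ⟨(x + y) / 2, by simp [h₁.ne', h₁.not_gt, h₂]⟩
    · refine ⟨x + 1, ?_⟩
      have h₁ : y < x + 1 := by linarith [not_lt.mp hxy]
      simp [hxy, h₁, h₁.ne]
  · rintro v ⟨z, rfl⟩
    by_cases hxz : x < z
    · rw [if_pos hxz, add_zero]
      by_cases hxy : x < y
      · rw [if_pos hxy, ← hm]
        split_ifs
        exacts [min_le_left _ _, (min_le_right _ _).trans (min_le_left _ _),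
          (min_le_right _ _).trans (min_le_right _ _)]
      · have hyz : y < z := (not_lt.mp hxy).trans_lt hxz
        simp [hxy, hyz, hyz.ne]
    · simp [hxz]

theorem Clone.ltWeight_of_Rabc {Γ : Set ((k : ℕ) × VRel k)} {a c : WithTop ℚ} {m b : ℚ}
    (hlt : Clone Γ (crisp LtS)) (hR : Clone Γ (Rabc a b c))
    (hm : min a (min (b : WithTop ℚ) c) = m) : Clone Γ (ltWeight m b) := by
  have hW := (hR.comp (![1, 2] : Fin 2 → Fin 3)).add (hlt.comp ![0, 2])
  refine Clone.proj (n := 1) hW fun s => ?_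
  have hs : s = ![s 0, s 1] := by ext i; fin_cases i <;> rfl
  have hset : {v | ∃ t : Fin 1 → ℚ, v = Rabc a b c (fun j => Fin.append s t (![1, 2] j))
        + crisp LtS (fun j => Fin.append s t (![0, 2] j))}
      = {v | ∃ z : ℚ, v = Rabc a b c ![s 1, z] + crisp LtS ![s 0, z]} := by
    ext v
    constructor
    · rintro ⟨t, rfl⟩
      refine ⟨t 0, ?_⟩
      congr 2 <;> ext j <;> fin_cases j <;> rfl
    · rintro ⟨z, rfl⟩
      refine ⟨![z], ?_⟩
      congr 2 <;> ext j <;> fin_cases j <;> rfl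
  rw [hset, hs]
  exact (ltWeight_isLeast hm (s 0) (s 1)).isGLB

theorem ltWeight_cyclic_sum_of_mem {m b : ℚ} {x : Fin 3 → ℚ} (hx : x ∈ CycS) :
    ltWeight m b ![x 0, x 1] + ltWeight m b ![x 1, x 2] + ltWeight m b ![x 2, x 0]
      = ((2 * m + b : ℚ) : WithTop ℚ) := by
  simp only [ltWeight, Matrix.cons_val_zero, Matrix.cons_val_one]
  norm_cast
  rcases hx with ⟨h₁, h₂⟩ | ⟨h₁, h₂⟩ | ⟨h₁, h₂⟩
  · simp [h₁, h₂, (h₁.trans h₂).not_gt]; ring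
  · simp [h₁, h₂, (h₁.trans h₂).not_gt]; ring
  · simp [h₁, h₂, (h₁.trans h₂).not_gt]; ring

/-- Off `Cyc` at most one of the three pairs `(x₀,x₁), (x₁,x₂), (x₂,x₀)` is increasing. -/
theorem ltWeight_cyclic_sum_of_not_mem {m b : ℚ} (hmb : m < b) {x : Fin 3 → ℚ} (hx : x ∉ CycS) :
    ((2 * m + b : ℚ) : WithTop ℚ)
      < ltWeight m b ![x 0, x 1] + ltWeight m b ![x 1, x 2] + ltWeight m b ![x 2, x 0] := by
  simp only [CycS, Set.mem_ofPred_eq, not_or, not_and] at hx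
  obtain ⟨h₀, h₁, h₂⟩ := hx
  simp only [ltWeight, Matrix.cons_val_zero, Matrix.cons_val_one]
  norm_cast
  by_cases h₀₁ : x 0 < x 1 <;> by_cases h₁₂ : x 1 < x 2 <;> by_cases h₂₀ : x 2 < x 0 <;>
    simp only [h₀₁, h₁₂, h₂₀, if_true, if_false] <;> first
    | linarith
    | exact absurd h₂₀ (h₁.trans h₂).not_gt
    | exact absurd h₁₂ (h₀ h₀₁)
    | exact absurd h₀₁ (h₂ h₂₀)
    | exact absurd h₂₀ (h₁ h₁₂)

theorem Clone.crisp_CycS_of_ltWeight {Γ : Set ((k : ℕ) × VRel k)} {m b : ℚ} (hmb : m < b)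
    (hM : Clone Γ (ltWeight m b)) : Clone Γ (crisp CycS) := by
  have hS := ((hM.comp (![0, 1] : Fin 2 → Fin 3)).add (hM.comp ![1, 2])).add (hM.comp ![2, 0])
  have hcomp : ∀ (x : Fin 3 → ℚ) (i j : Fin 3),
      (fun l => x (![i, j] l)) = ![x i, x j] := by
    intro x i j; ext l; fin_cases l <;> rfl
  simp only [hcomp] at hS
  refine hS.crisp_of_argmin ⟨![0, 1, 2], Or.inl ⟨by simp, by simp [Matrix.cons_val]⟩⟩
    (fun x hx => ltWeight_cyclic_sum_of_mem hx)
    (fun x hx => ltWeight_cyclic_sum_of_not_mem hmb hx)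

theorem Clone.crisp_CycS_of_Rabc {Γ : Set ((k : ℕ) × VRel k)} {a b c : WithTop ℚ}
    (hlt : Clone Γ (crisp LtS)) (hR : Clone Γ (Rabc a b c))
    (hm : min a (min b c) < b) (hb : b < ⊤) : Clone Γ (crisp CycS) := by
  obtain ⟨b', rfl⟩ := WithTop.ne_top_iff_exists.mp hb.ne
  obtain ⟨m, hm'⟩ := WithTop.ne_top_iff_exists.mp (hm.trans hb).ne
  rw [← hm'] at hm
  exact Clone.crisp_CycS_of_ltWeight (WithTop.coe_lt_coe.mp hm)
    (Clone.ltWeight_of_Rabc hlt hR hm'.symm)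

theorem stmt8_general (Γ : Set ((k : ℕ) × VRel k))
    (hlt : Clone Γ (crisp LtS)) (a b c : WithTop ℚ)
    (habc : (a < min b c ∧ min b c < ⊤) ∨ (b ≠ c ∧ b < ⊤ ∧ c < ⊤))
    (hR : Clone Γ (Rabc a b c)) :
    Clone Γ (crisp CycS) := by
  have hR' : Clone Γ (Rabc a c b) := Rabc_comp_swap a b c ▸ hR.comp ![1, 0]
  rcases habc with ⟨ha, hfin⟩ | ⟨hne, hb, hc⟩
  · rcases min_lt_iff.mp hfin with hb | hc
    · exact Clone.crisp_CycS_of_Rabc hlt hR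
        ((min_le_left a _).trans_lt (ha.trans_le (min_le_left b c))) hb
    · exact Clone.crisp_CycS_of_Rabc hlt hR'
        ((min_le_left a _).trans_lt (ha.trans_le (min_le_right b c))) hc
  · rcases hne.lt_or_gt with hbc | hcb
    · exact Clone.crisp_CycS_of_Rabc hlt hR'
        (((min_le_right a _).trans (min_le_right c b)).trans_lt hbc) hc
    · exact Clone.crisp_CycS_of_Rabc hlt hR
        (((min_le_right a _).trans (min_le_right b c)).trans_lt hcb) hb

/-- If `⟨Γ⟩` contains crisp `<` and `R_{α,β,γ}` where `α < min(β,γ) < ∞`, or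
`β ≠ γ` with `β, γ` finite, then `⟨Γ⟩` contains the crisp relation `Cyc`. -/
theorem stmt8 (Γ : Set ((k : ℕ) × VRel k)) (hT : ∀ p ∈ Γ, Temporal p.2)
    (hlt : Clone Γ (crisp LtS)) (a b c : WithTop ℚ)
    (habc : (a < min b c ∧ min b c < ⊤) ∨ (b ≠ c ∧ b < ⊤ ∧ c < ⊤))
    (hR : Clone Γ (Rabc a b c)) :
    Clone Γ (crisp CycS) :=
  stmt8_general Γ hlt a b c habc hR
end

section
/- Let R be a temporal valued relation of arity k on ℚ, and suppose that some lex-operation improves R. Then for every injective tuple s ∈ ℚ^k (pairwise distinct entries) with R(s) < ∞ and every t ∈ ℚ^k, one has R(s) ≤ R(t). In particular, there is m ∈ ℚ such that for every injective s ∈ ℚ^k, R(s) = m or R(s) = ∞. -/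
open Classical

open Order Order.PartialIso in
/-- Extend a finite order-matching pair of tuples to an order automorphism of ℚ. -/
lemma exists_strictMono_bij_extend {k : ℕ} (s u : Fin k → ℚ)
    (h : ∀ i j, s i < s j ↔ u i < u j) :
    ∃ α : ℚ → ℚ, Function.Bijective α ∧ StrictMono α ∧ ∀ i, α (s i) = u i := by
  have hcmp : ∀ i j : Fin k, cmp (s i) (s j) = cmp (u i) (u j) := by
    intro i j
    rcases lt_trichotomy (s i) (s j) with hlt | heq | hgt
    · rw [(cmp_eq_lt_iff _ _).2 hlt, (cmp_eq_lt_iff _ _).2 ((h i j).1 hlt)]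
    · have h1 : ¬ u i < u j := fun hc => absurd heq (ne_of_lt ((h i j).2 hc))
      have h2 : ¬ u j < u i := fun hc => (lt_irrefl _ (heq ▸ (h j i).2 hc))
      have huv : u i = u j := le_antisymm (not_lt.1 h2) (not_lt.1 h1)
      rw [(cmp_eq_eq_iff _ _).2 heq, (cmp_eq_eq_iff _ _).2 huv]
    · rw [(cmp_eq_gt_iff _ _).2 hgt, (cmp_eq_gt_iff _ _).2 ((h j i).1 hgt)]
  let f₀ : PartialIso ℚ ℚ :=
    ⟨Finset.image (fun i => (s i, u i)) Finset.univ, by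
      intro p hp q hq
      simp only [Finset.mem_image, Finset.mem_univ, true_and] at hp hq
      obtain ⟨i, rfl⟩ := hp
      obtain ⟨j, rfl⟩ := hq
      exact hcmp i j⟩
  let to_cofinal : ℚ ⊕ ℚ → Cofinal (PartialIso ℚ ℚ) := fun p =>
    Sum.recOn p (definedAtLeft ℚ) (definedAtRight ℚ)
  let our_ideal : Order.Ideal (PartialIso ℚ ℚ) := idealOfCofinals f₀ to_cofinal
  let F := fun a => funOfIdeal a our_ideal (cofinal_meets_idealOfCofinals _ to_cofinal (Sum.inl a))
  let G := fun b => invOfIdeal b our_ideal (cofinal_meets_idealOfCofinals _ to_cofinal (Sum.inr b))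
  let iso : ℚ ≃o ℚ := OrderIso.ofCmpEqCmp (fun a => (F a).val) (fun b => (G b).val) fun a b => by
      rcases (F a).prop with ⟨f, hf, ha⟩
      rcases (G b).prop with ⟨g, hg, hb⟩
      rcases our_ideal.directed _ hf _ hg with ⟨m, _, fm, gm⟩
      exact m.prop (a, _) (fm ha) (_, b) (gm hb)
  refine ⟨iso, iso.bijective, iso.strictMono, fun i => ?_⟩
  show (F (s i)).val = u i
  rcases (F (s i)).prop with ⟨f, hf, hmem⟩
  rcases our_ideal.directed _ hf _ (mem_idealOfCofinals f₀ to_cofinal) with ⟨m, _, fm, f0m⟩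
  have h0 : (s i, u i) ∈ f₀.val :=
    Finset.mem_image.2 ⟨i, Finset.mem_univ i, rfl⟩
  have hcm := m.prop (s i, (F (s i)).val) (fm hmem) (s i, u i) (f0m h0)
  have h' : cmp ((F (s i)).val) (u i) = Ordering.eq := by
    rw [← hcm]; exact cmp_self_eq_eq (s i)
  exact (cmp_eq_eq_iff _ _).1 h'

/-- If a temporal valued relation `R` is improved by some lex-operation, then the value
of `R` at any feasible injective tuple is a global minimum; in particular `R` takes a
single finite value `m` (or `∞`) on injective tuples. -/
theorem stmt11 {k : ℕ} (R : VRel k) (hT : Temporal R)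
    (l : ℚ → ℚ → ℚ) (hl : IsLex l) (himp : Improves2 l R) :
    (∀ s : Fin k → ℚ, Function.Injective s → R s ≠ ⊤ → ∀ t : Fin k → ℚ, R s ≤ R t) ∧
    (∃ m : ℚ, ∀ s : Fin k → ℚ, Function.Injective s →
      R s = (m : WithTop ℚ) ∨ R s = ⊤) := by
  have main : ∀ s : Fin k → ℚ, Function.Injective s → R s ≠ ⊤ → ∀ t : Fin k → ℚ, R s ≤ R t := by
    intro s hs hfin t
    set u : Fin k → ℚ := fun i => l (s i) (t i) with hu
    have horder : ∀ i j, s i < s j ↔ u i < u j := by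
      intro i j
      constructor
      · intro hlt
        exact (hl (s i) (s j) (t i) (t j)).2 (Or.inl hlt)
      · intro hlt
        rcases (hl (s i) (s j) (t i) (t j)).1 hlt with h' | ⟨heq, _⟩
        · exact h'
        · exact absurd (hs heq) (by
            rintro rfl
            exact lt_irrefl _ hlt)
      -- fix below if needed
    obtain ⟨α, hbij, hmono, hα⟩ := exists_strictMono_bij_extend s u horder
    have hRu : R u = R s := by
      have := hT α hbij hmono s
      rw [show (fun i => α (s i)) = u from funext hα] at this
      exact this
    have himp' := himp s t
    rw [show (fun i => l (s i) (t i)) = u from rfl, hRu] at himp'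
    have h2 : R s + R s ≤ R s + R t := by
      rwa [two_nsmul] at himp'
    exact (WithTop.add_le_add_iff_left hfin).1 h2
  refine ⟨main, ?_⟩
  by_cases hex : ∃ s : Fin k → ℚ, Function.Injective s ∧ R s ≠ ⊤
  · obtain ⟨s₀, hs₀, hfin₀⟩ := hex
    obtain ⟨m, hm⟩ := Option.ne_none_iff_exists'.1 hfin₀
    refine ⟨m, fun s hs => ?_⟩
    by_cases hfin : R s = ⊤
    · exact Or.inr hfin
    · left
      have h1 := main s hs hfin s₀
      have h2 := main s₀ hs₀ hfin₀ s
      rw [← le_antisymm h2 h1]; exact hm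
  · exact ⟨0, fun s hs => Or.inr (by
      by_contra hfin
      exact hex ⟨s, hs, hfin⟩)⟩
end

section
/- For all x, y ∈ ℚ, the infimum over z ∈ ℚ of R^mix(y,z,x) + (≠)₀¹(y,z) equals (<)₀¹(x,y), and likewise the infimum over z ∈ ℚ of R^mix(y,z,x) + R_{1,0,∞}(y,z) equals (<)₀¹(x,y). Here all values lie in WithTop ℚ, (<)₀¹(x,y) = 0 if x < y and 1 otherwise, (≠)₀¹(a,b) = 0 if a ≠ b and 1 if a = b, and R_{1,0,∞}(a,b) = 1 if a = b, 0 if a < b, and ∞ if a > b. -/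
/-- The crisp ternary relation `R^mix`, as a valued relation with values in `ℚ ∪ {∞}`. -/
def Rmix (a b c : ℚ) : WithTop ℚ := if a = b ∨ (c < a ∧ c < b) then 0 else ⊤

/-- The valued relation `(≠)₀¹`. -/
def ne01 (a b : ℚ) : WithTop ℚ := if a = b then 1 else 0

/-- The valued relation `R_{1,0,∞}`. -/
def R10inf (a b : ℚ) : WithTop ℚ := if a = b then 1 else if a < b then 0 else ⊤

/-- The valued relation `(<)₀¹`. -/
def lt01 (x y : ℚ) : WithTop ℚ := if x < y then 0 else 1

lemma Rmix_nonneg (a b c : ℚ) : (0 : WithTop ℚ) ≤ Rmix a b c := by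
  unfold Rmix; split <;> simp

lemma ne01_nonneg (a b : ℚ) : (0 : WithTop ℚ) ≤ ne01 a b := by
  unfold ne01; split <;> simp

lemma R10inf_nonneg (a b : ℚ) : (0 : WithTop ℚ) ≤ R10inf a b := by
  unfold R10inf; split
  · simp
  · split <;> simp

/-- For all `x, y ∈ ℚ`, the infimum over `z` of `R^mix(y,z,x) + (≠)₀¹(y,z)` equals
`(<)₀¹(x,y)`, and likewise with `R_{1,0,∞}(y,z)` in place of `(≠)₀¹(y,z)`. -/
theorem stmt18 :
    ∀ x y : ℚ,
      IsGLB {v : WithTop ℚ | ∃ z : ℚ, v = Rmix y z x + ne01 y z} (lt01 x y) ∧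
      IsGLB {v : WithTop ℚ | ∃ z : ℚ, v = Rmix y z x + R10inf y z} (lt01 x y) := by
  intro x y
  by_cases h : x < y
  · have hz : x < max x y + 1 := lt_of_le_of_lt (le_max_left x y) (by linarith)
    have hyz : y < max x y + 1 := lt_of_le_of_lt (le_max_right x y) (by linarith)
    have hlt : lt01 x y = 0 := by simp [lt01, h]
    constructor <;> apply IsLeast.isGLB <;> constructor
    · exact ⟨max x y + 1, by
        simp [Rmix, ne01, hlt, h, hz, hyz.ne, hyz.ne']⟩
    · rintro v ⟨z, rfl⟩
      rw [hlt]
      exact add_nonneg (Rmix_nonneg _ _ _) (ne01_nonneg _ _)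
    · exact ⟨max x y + 1, by
        simp [Rmix, R10inf, hlt, h, hz, hyz, hyz.ne, hyz.ne']⟩
    · rintro v ⟨z, rfl⟩
      rw [hlt]
      exact add_nonneg (Rmix_nonneg _ _ _) (R10inf_nonneg _ _)
  · have hlt : lt01 x y = 1 := by simp [lt01, h]
    have hRtop : ∀ z : ℚ, y ≠ z → Rmix y z x = ⊤ := by
      intro z hne
      simp [Rmix, hne]; intro hxy; exact absurd hxy h
    constructor <;> apply IsLeast.isGLB <;> constructor
    · exact ⟨y, by simp [Rmix, ne01, hlt]⟩
    · rintro v ⟨z, rfl⟩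
      rw [hlt]
      by_cases hz : y = z
      · simp [Rmix, ne01, hz]
      · simp [hRtop z hz]
    · exact ⟨y, by simp [Rmix, R10inf, hlt]⟩
    · rintro v ⟨z, rfl⟩
      rw [hlt]
      by_cases hz : y = z
      · simp [Rmix, R10inf, hz]
      · simp [hRtop z hz]
end

section
/- No constant operation and no injective binary operation on ℚ improves the crisp relation Dis. Precisely: (a) for every b ∈ ℚ, the unary operation x ↦ b does not improve Dis (there is t ∈ Dis with Dis(b,b,b) > Dis(t)); (b) for every injective g : ℚ² → ℚ, g does not improve Dis (there are s, t ∈ Dis such that the componentwise image g(s,t) ∉ Dis). -/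
open Classical

/-- No constant unary operation and no injective binary operation on `ℚ` improves the
crisp relation `Dis`. -/
theorem stmt19 :
    (∀ b : ℚ, ¬ Improves1 (fun _ => b) (crisp DisS)) ∧
    (∀ g : ℚ → ℚ → ℚ, Function.Injective (fun p : ℚ × ℚ => g p.1 p.2) →
      ¬ Improves2 g (crisp DisS)) := by
  constructor
  · intro b h
    have := h ![0, 0, 1]
    have h1 : (![0, 0, 1] : Fin 3 → ℚ) ∈ DisS := by
      simp [DisS]
    have h2 : (fun i : Fin 3 => b) ∉ DisS := by
      simp [DisS]
    simp only [crisp, if_pos h1, if_neg h2] at this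
    exact (by simp : ¬ ((⊤ : WithTop ℚ) ≤ 0)) this
  · intro g hg h
    have := h ![0, 0, 1] ![0, 1, 1]
    have h1 : (![0, 0, 1] : Fin 3 → ℚ) ∈ DisS := by simp [DisS]
    have h2 : (![0, 1, 1] : Fin 3 → ℚ) ∈ DisS := by simp [DisS]
    have hne : ∀ a b c d : ℚ, (a, b) ≠ (c, d) → g a b ≠ g c d := by
      intro a b c d hab he
      exact hab (hg (show (fun p : ℚ × ℚ => g p.1 p.2) (a, b) = _ from he))
    have h3 : (fun i : Fin 3 => g (![0, 0, 1] i) (![0, 1, 1] i)) ∉ DisS := by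
      intro hmem
      rcases hmem with ⟨he, _⟩ | ⟨_, he⟩
      · exact hne 0 0 0 1 (by simp [Prod.ext_iff]) (by simpa using he)
      · exact hne 0 1 1 1 (by simp [Prod.ext_iff]) (by simpa using he)
    simp only [crisp, if_pos h1, if_pos h2, if_neg h3] at this
    rw [two_smul, top_add, add_zero] at this
    exact (by simp : ¬ ((⊤ : WithTop ℚ) ≤ 0)) this
end
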